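/- In a dagger category, if f∂ : B ⟶ A is a †-Drazin inverse of f : A ⟶ B, then (f∂)† ≫ f∂ : A ⟶ A is a Drazin inverse of f ≫ f†, and f∂ ≫ (f∂)† : B ⟶ B is a Drazin inverse of f† ≫ f. -/
import Mathlib


open CategoryTheory

universe v u

/-- A dagger on a category: an identity-on-objects contravariant involution. -/
structure Dagger (C : Type u) [Category.{v} C] where
  dag : ∀ {X Y : C}, (X ⟶ Y) → (Y ⟶ X)
  dag_id : ∀ X : C, dag (𝟙 X) = 𝟙 X
  dag_comp : ∀ {X Y Z : C} (f : X ⟶ Y) (g : Y ⟶ Z), dag (f ≫ g) = dag g ≫ dag f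
  dag_dag : ∀ {X Y : C} (f : X ⟶ Y), dag (dag f) = f

/-- Iterated composition power of an endomorphism, with `cpow x 0 = 𝟙 A`. -/
def cpow {C : Type u} [Category.{v} C] {A : C} (x : A ⟶ A) : ℕ → (A ⟶ A)
  | 0 => 𝟙 A
  | n + 1 => cpow x n ≫ x

/-- `p` is a †-Drazin inverse of `f`. -/
def IsDagDrazinInv {C : Type u} [Category.{v} C] (D : Dagger C)
    {A B : C} (f : A ⟶ B) (p : B ⟶ A) : Prop :=
  (∃ k : ℕ, cpow (f ≫ D.dag f) k ≫ f ≫ p = cpow (f ≫ D.dag f) k ∧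
    p ≫ f ≫ cpow (D.dag f ≫ f) k = cpow (D.dag f ≫ f) k) ∧
  p ≫ f ≫ p = p ∧
  D.dag (f ≫ p) = f ≫ p ∧
  D.dag (p ≫ f) = p ≫ f

/-- `d` is a Drazin inverse of the endomorphism `x`. -/
def IsDrazinInv {C : Type u} [Category.{v} C] {A : C} (x d : A ⟶ A) : Prop :=
  (∃ k : ℕ, cpow x (k + 1) ≫ d = cpow x k) ∧
  d ≫ x ≫ d = d ∧
  x ≫ d = d ≫ x

lemma cpow_comm' {C : Type u} [Category.{v} C] {A : C} (x : A ⟶ A) (n : ℕ) :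
    cpow x n ≫ x = x ≫ cpow x n := by
  induction n with
  | zero => simp [cpow]
  | succ n ih => rw [cpow, ih, Category.assoc, ih]

lemma dag_cpow' {C : Type u} [Category.{v} C] (D : Dagger C) {A : C} (x : A ⟶ A)
    (hx : D.dag x = x) (n : ℕ) : D.dag (cpow x n) = cpow x n := by
  induction n with
  | zero => simp only [cpow, D.dag_id]
  | succ n ih => rw [cpow, D.dag_comp, hx, ih, cpow_comm']

/-- If `p` is the †-Drazin inverse of `f`, then `p† ≫ p` is a Drazin inverse of `f ≫ f†`
and `p ≫ p†` is a Drazin inverse of `f† ≫ f`. -/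
theorem drazinInv_of_dagDrazinInv {C : Type u} [Category.{v} C] (D : Dagger C)
    {A B : C} (f : A ⟶ B) (p : B ⟶ A) (h : IsDagDrazinInv D f p) :
    IsDrazinInv (f ≫ D.dag f) (D.dag p ≫ p) ∧
    IsDrazinInv (D.dag f ≫ f) (p ≫ D.dag p) := by
  obtain ⟨⟨k, h1, h2⟩, hpfp, h3, h4⟩ := h
  have hA : D.dag f ≫ D.dag p = p ≫ f := by rw [← D.dag_comp]; exact h4
  have hB : D.dag p ≫ D.dag f = f ≫ p := by rw [← D.dag_comp]; exact h3
  have hA' : ∀ {Z : C} (g : B ⟶ Z), D.dag f ≫ D.dag p ≫ g = p ≫ f ≫ g := by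
    intro Z g; rw [← Category.assoc, hA, Category.assoc]
  have hB' : ∀ {Z : C} (g : A ⟶ Z), D.dag p ≫ D.dag f ≫ g = f ≫ p ≫ g := by
    intro Z g; rw [← Category.assoc, hB, Category.assoc]
  have hpfp' : ∀ {Z : C} (g : A ⟶ Z), p ≫ f ≫ p ≫ g = p ≫ g := by
    intro Z g
    rw [show p ≫ f ≫ p ≫ g = (p ≫ f ≫ p) ≫ g by simp only [Category.assoc], hpfp]
  have hy : D.dag (D.dag f ≫ f) = D.dag f ≫ f := by
    rw [D.dag_comp, D.dag_dag]
  have h2' : cpow (D.dag f ≫ f) k ≫ D.dag f ≫ D.dag p = cpow (D.dag f ≫ f) k := by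
    have := congrArg D.dag h2
    rwa [D.dag_comp, D.dag_comp, dag_cpow' D _ hy, Category.assoc] at this
  constructor
  · refine ⟨⟨k, ?_⟩, ?_, ?_⟩
    · calc cpow (f ≫ D.dag f) (k + 1) ≫ D.dag p ≫ p
          = cpow (f ≫ D.dag f) k ≫ f ≫ D.dag f ≫ D.dag p ≫ p := by
            simp only [cpow, Category.assoc]
        _ = cpow (f ≫ D.dag f) k ≫ f ≫ p ≫ f ≫ p := by rw [hA']
        _ = cpow (f ≫ D.dag f) k ≫ f ≫ p := by rw [hpfp]
        _ = cpow (f ≫ D.dag f) k := h1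
    · calc (D.dag p ≫ p) ≫ (f ≫ D.dag f) ≫ D.dag p ≫ p
          = D.dag p ≫ p ≫ f ≫ D.dag f ≫ D.dag p ≫ p := by
            simp only [Category.assoc]
        _ = D.dag p ≫ p ≫ f ≫ p ≫ f ≫ p := by rw [hA']
        _ = D.dag p ≫ p := by rw [hpfp, hpfp]
    · calc (f ≫ D.dag f) ≫ D.dag p ≫ p
          = f ≫ D.dag f ≫ D.dag p ≫ p := by simp only [Category.assoc]
        _ = f ≫ p ≫ f ≫ p := by rw [hA']
        _ = f ≫ p := by rw [hpfp]
        _ = (f ≫ p) ≫ f ≫ p := by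
            rw [show (f ≫ p) ≫ f ≫ p = f ≫ p ≫ f ≫ p by simp only [Category.assoc],
              hpfp]
        _ = (D.dag p ≫ D.dag f) ≫ D.dag p ≫ D.dag f := by rw [hB]
        _ = D.dag p ≫ (D.dag f ≫ D.dag p) ≫ D.dag f := by simp only [Category.assoc]
        _ = D.dag p ≫ (p ≫ f) ≫ D.dag f := by rw [hA]
        _ = (D.dag p ≫ p) ≫ f ≫ D.dag f := by simp only [Category.assoc]
  · refine ⟨⟨k, ?_⟩, ?_, ?_⟩
    · calc cpow (D.dag f ≫ f) (k + 1) ≫ p ≫ D.dag p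
          = cpow (D.dag f ≫ f) k ≫ D.dag f ≫ (f ≫ p) ≫ D.dag p := by
            simp only [cpow, Category.assoc]
        _ = cpow (D.dag f ≫ f) k ≫ D.dag f ≫ (D.dag p ≫ D.dag f) ≫ D.dag p := by
            rw [hB]
        _ = (cpow (D.dag f ≫ f) k ≫ D.dag f ≫ D.dag p) ≫ D.dag f ≫ D.dag p := by
            simp only [Category.assoc]
        _ = cpow (D.dag f ≫ f) k ≫ D.dag f ≫ D.dag p := by conv_lhs => rw [h2']
        _ = cpow (D.dag f ≫ f) k := h2'
    · calc (p ≫ D.dag p) ≫ (D.dag f ≫ f) ≫ p ≫ D.dag p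
          = p ≫ D.dag p ≫ D.dag f ≫ f ≫ p ≫ D.dag p := by
            simp only [Category.assoc]
        _ = p ≫ f ≫ p ≫ f ≫ p ≫ D.dag p := by rw [hB']
        _ = p ≫ D.dag p := by rw [hpfp', hpfp']
    · calc (D.dag f ≫ f) ≫ p ≫ D.dag p
          = D.dag f ≫ (f ≫ p) ≫ D.dag p := by simp only [Category.assoc]
        _ = D.dag f ≫ (D.dag p ≫ D.dag f) ≫ D.dag p := by rw [hB]
        _ = (D.dag f ≫ D.dag p) ≫ D.dag f ≫ D.dag p := by simp only [Category.assoc]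
        _ = (p ≫ f) ≫ p ≫ f := by rw [hA]
        _ = p ≫ f ≫ p ≫ f := by simp only [Category.assoc]
        _ = p ≫ f := hpfp' f
        _ = p ≫ f ≫ p ≫ f := (hpfp' f).symm
        _ = p ≫ (D.dag p ≫ D.dag f ≫ f) := by rw [hB']
        _ = (p ≫ D.dag p) ≫ D.dag f ≫ f := by simp only [Category.assoc]
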